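/- arXiv:1011.5484 — 5 statements merged into one kernel-verified Lean document; each statement's English description precedes it below -/
import Mathlib

section
/- Let A → A₀ be a surjection of commutative rings with nilpotent kernel, and let B be an A-algebra with B₀ = A₀ ⊗_A B. If B₀ is a finite type A₀-algebra, then B is a finite type A-algebra. -/
open TensorProduct

/-- Let `A → A₀ = A/I` be a surjection of commutative rings with
nilpotent kernel `I`, and let `B` be an `A`-algebra with `B₀ = A₀ ⊗_A B`.
If `B₀` is a finite type `A₀`-algebra, then `B` is a finite type `A`-algebra. -/
theorem finiteType_of_finiteType_tensor_quotient
    (A : Type*) [CommRing A] (I : Ideal A) (k : ℕ) (hI : I ^ k = ⊥)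
    (B : Type*) [CommRing B] [Algebra A B]
    (hB : Algebra.FiniteType (A ⧸ I) ((A ⧸ I) ⊗[A] B)) :
    Algebra.FiniteType A B := by
  classical
  set T := (A ⧸ I) ⊗[A] B
  have hAq : Algebra.FiniteType A (A ⧸ I) :=
    Algebra.FiniteType.of_surjective (Algebra.ofId A (A ⧸ I))
      Ideal.Quotient.mk_surjective
  have hT : Algebra.FiniteType A T := Algebra.FiniteType.trans hAq hB
  obtain ⟨s, hs⟩ := hT
  set f : B →ₐ[A] T := Algebra.TensorProduct.includeRight
  have hfsurj : Function.Surjective f := by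
    intro x
    induction x using TensorProduct.induction_on with
    | zero => exact ⟨0, map_zero f⟩
    | tmul a b =>
      obtain ⟨a', rfl⟩ := Ideal.Quotient.mk_surjective a
      refine ⟨a' • b, ?_⟩
      show (1 : A ⧸ I) ⊗ₜ[A] (a' • b) = _
      rw [TensorProduct.tmul_smul, TensorProduct.smul_tmul', Algebra.smul_def, mul_one]
      rfl
    | add x y hx hy =>
      obtain ⟨b₁, rfl⟩ := hx
      obtain ⟨b₂, rfl⟩ := hy
      exact ⟨b₁ + b₂, map_add f b₁ b₂⟩
  choose g hg using hfsurj
  set t : Finset B := s.image g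
  set S : Subalgebra A B := Algebra.adjoin A (t : Set B)
  -- f maps S onto T
  have hmap : S.map f = ⊤ := by
    rw [AlgHom.map_adjoin]
    rw [eq_top_iff, ← hs]
    apply Algebra.adjoin_mono
    intro x hx
    exact ⟨g x, Finset.mem_coe.2 (Finset.mem_image_of_mem g hx), hg x⟩
  -- kernel of f is I • ⊤
  have hker : ∀ b : B, f b = 0 → b ∈ (I • ⊤ : Submodule A B) := by
    intro b hb
    have h1 : (TensorProduct.quotTensorEquivQuotSMul (M := B) I) (f b)
        = Submodule.Quotient.mk b := by
      have h2 := TensorProduct.quotTensorEquivQuotSMul_mk_tmul (M := B) I 1 b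
      rw [map_one, one_smul] at h2
      exact h2
    rw [hb, LinearEquiv.map_zero] at h1
    exact (Submodule.Quotient.mk_eq_zero _).1 h1.symm
  -- ∀ b, ∃ p ∈ S, b - p ∈ I • ⊤
  have hdecomp : (⊤ : Submodule A B) ≤ S.toSubmodule ⊔ (I • ⊤ : Submodule A B) := by
    intro b _
    have : f b ∈ S.map f := hmap ▸ Algebra.mem_top
    obtain ⟨p, hp, hfp⟩ := this
    have : f (b - p) = 0 := by
      rw [map_sub]; exact sub_eq_zero.mpr hfp.symm
    have hbp := hker _ this
    have : b = p + (b - p) := by ring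
    rw [this]
    exact Submodule.add_mem_sup hp hbp
  -- induction: ⊤ ≤ S ⊔ I^n • ⊤
  have hind : ∀ n : ℕ, (⊤ : Submodule A B) ≤ S.toSubmodule ⊔ (I ^ n • ⊤ : Submodule A B) := by
    intro n
    induction n with
    | zero =>
      rw [pow_zero, Ideal.one_eq_top, Submodule.top_smul]
      exact le_sup_right
    | succ n ih =>
      refine le_trans ih (sup_le le_sup_left ?_)
      have htop : S.toSubmodule ⊔ (I • ⊤ : Submodule A B) = ⊤ :=
        top_le_iff.1 hdecomp
      have : (I ^ n • ⊤ : Submodule A B) = I ^ n • (S.toSubmodule ⊔ (I • ⊤ : Submodule A B)) := by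
        conv_lhs => rw [← htop]
      rw [this, Submodule.smul_sup]
      apply sup_le
      · refine le_trans ?_ le_sup_left
        apply Submodule.smul_le.2
        intro r _ m hm
        exact S.toSubmodule.smul_mem r hm
      · refine le_trans (le_of_eq ?_) le_sup_right
        rw [← Submodule.smul_assoc, smul_eq_mul, ← pow_succ]
  have := hind k
  rw [hI] at this
  simp only [Submodule.bot_smul, sup_bot_eq] at this
  have hStop : S = ⊤ := by
    rw [eq_top_iff]
    intro b _
    exact this (Submodule.mem_top)
  exact ⟨t, hStop⟩
end

section
/- Let A → A₀ be a surjection of commutative rings with nilpotent kernel, and let B be a flat A-algebra such that B₀ = A₀ ⊗_A B is a finitely presented A₀-algebra. Then B is a finitely presented A-algebra. -/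
open TensorProduct

set_option maxHeartbeats 1000000

/-- Nilpotent Nakayama for submodules. -/
lemma aux_le_of_le_sup_smul {A M : Type*} [CommRing A] [AddCommGroup M] [Module A M]
    (I : Ideal A) (k : ℕ) (hI : I ^ k = ⊥) {N X : Submodule A M}
    (h : X ≤ N ⊔ I • X) : X ≤ N := by
  have key : ∀ n : ℕ, X ≤ N ⊔ I ^ n • X := by
    intro n
    induction n with
    | zero => simpa using le_sup_right
    | succ n ih =>
      refine ih.trans ?_
      have h1 : I ^ n • X ≤ I ^ n • (N ⊔ I • X) := smul_mono_right _ h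
      refine sup_le le_sup_left (h1.trans ?_)
      rw [Submodule.smul_sup]
      refine sup_le ((Submodule.smul_le_right).trans le_sup_left) ?_
      rw [← Submodule.smul_assoc, smul_eq_mul, ← pow_succ]
      exact le_sup_right
  have := key k
  rwa [hI, Submodule.bot_smul, sup_bot_eq] at this

/-- Flatness: the kernel of a surjection onto a flat module meets `I•⊤` in `I•ker`. -/
lemma aux_ker_inf_smul_top_le {A P B : Type*} [CommRing A] [AddCommGroup P] [Module A P]
    [AddCommGroup B] [Module A B] [Module.Flat A B] (f : P →ₗ[A] B)
    (hf : Function.Surjective f) (I : Ideal A) :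
    LinearMap.ker f ⊓ (I • ⊤ : Submodule A P) ≤ I • LinearMap.ker f := by
  classical
  set J := LinearMap.ker f with hJ
  have hexact : Function.Exact (Submodule.subtype J) f := LinearMap.exact_subtype_ker_map f
  have hT : Function.Exact (LinearMap.lTensor (↥I) (Submodule.subtype J))
      (LinearMap.lTensor (↥I) f) := lTensor_exact (↥I) hexact hf
  -- the action maps
  let ψP : (↥I) ⊗[A] P →ₗ[A] P :=
    (TensorProduct.lid A P).toLinearMap ∘ₗ LinearMap.rTensor P I.subtype
  let ψB : (↥I) ⊗[A] B →ₗ[A] B :=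
    (TensorProduct.lid A B).toLinearMap ∘ₗ LinearMap.rTensor B I.subtype
  have hψP : ∀ (a : ↥I) (x : P), ψP (a ⊗ₜ x) = (a : A) • x := by
    intro a x; simp [ψP]
  have hψB : ∀ (a : ↥I) (x : B), ψB (a ⊗ₜ x) = (a : A) • x := by
    intro a x; simp [ψB]
  have hinj : Function.Injective ψB := by
    refine (TensorProduct.lid A B).injective.comp ?_
    exact Module.Flat.rTensor_preserves_injective_linearMap I.subtype Subtype.coe_injective
  have hnat : f ∘ₗ ψP = ψB ∘ₗ LinearMap.lTensor (↥I) f := by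
    apply TensorProduct.ext'
    intro a x
    simp [hψP, hψB]
  have hrange : (I • ⊤ : Submodule A P) ≤ LinearMap.range ψP := by
    refine Submodule.smul_le.mpr ?_
    intro a ha x _
    exact ⟨(⟨a, ha⟩ : ↥I) ⊗ₜ x, hψP _ _⟩
  intro x hx
  obtain ⟨hxJ, hxI⟩ := hx
  obtain ⟨t, ht⟩ := hrange hxI
  have h0 : LinearMap.lTensor (↥I) f t = 0 := by
    apply hinj
    have := LinearMap.congr_fun hnat t
    simp only [LinearMap.comp_apply] at this
    rw [map_zero, ← this, ht]
    exact hxJ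
  obtain ⟨s, hs⟩ := (hT _).mp h0
  rw [← ht, ← hs]
  clear ht hs h0 hxJ hxI
  induction s with
  | zero => simpa using Submodule.zero_mem _
  | tmul a y =>
    rw [LinearMap.lTensor_tmul, hψP]
    exact Submodule.smul_mem_smul a.2 y.2
  | add s₁ s₂ ih₁ ih₂ =>
    rw [map_add, map_add]
    exact Submodule.add_mem _ ih₁ ih₂

/-- Let `A → A₀ = A/I` be a surjection of commutative rings with
nilpotent kernel `I` (`I ^ k = 0`), and let `B` be a flat `A`-algebra such that
`B₀ = A₀ ⊗_A B` is a finitely presented `A₀`-algebra. Then `B` is a finitely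
presented `A`-algebra. -/
theorem finitePresentation_of_flat_and_finitePresentation_tensor_quotient
    (A : Type*) [CommRing A] (I : Ideal A) (k : ℕ) (hI : I ^ k = ⊥)
    (B : Type*) [CommRing B] [Algebra A B] [Module.Flat A B]
    (hB : Algebra.FinitePresentation (A ⧸ I) ((A ⧸ I) ⊗[A] B)) :
    Algebra.FinitePresentation A B := by
  classical
  letI : Algebra.FinitePresentation (A ⧸ I) ((A ⧸ I) ⊗[A] B) := hB
  let πB : B →ₐ[A] (A ⧸ I) ⊗[A] B := Algebra.TensorProduct.includeRight
  have hπB_apply : ∀ b : B, πB b = (1 : A ⧸ I) ⊗ₜ[A] b := fun b => rfl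
  -- every element of the tensor product lies in the `A⧸I`-span of the image of `B`
  have hspan : ∀ x : (A ⧸ I) ⊗[A] B, x ∈ Submodule.span (A ⧸ I) (Set.range πB) := by
    intro x
    induction x with
    | zero => exact Submodule.zero_mem _
    | tmul a b =>
      obtain ⟨a', rfl⟩ := Ideal.Quotient.mk_surjective a
      have h1 : (Ideal.Quotient.mk I a' : A ⧸ I) ⊗ₜ[A] b
          = (Ideal.Quotient.mk I a' : A ⧸ I) • ((1 : A ⧸ I) ⊗ₜ[A] b) := by
        rw [TensorProduct.smul_tmul', smul_eq_mul, mul_one]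
      rw [h1]
      exact Submodule.smul_mem _ _ (Submodule.subset_span ⟨b, rfl⟩)
    | add x y hx hy => exact Submodule.add_mem _ hx hy
  -- kernel of `πB` is `I • ⊤`
  have hker : ∀ x : B, πB x = 0 ↔ x ∈ (I • ⊤ : Submodule A B) := by
    intro x
    have he : (quotTensorEquivQuotSMul B I) ((1 : A ⧸ I) ⊗ₜ[A] x)
        = Submodule.Quotient.mk x := by
      simpa using quotTensorEquivQuotSMul_mk_tmul I 1 x
    rw [hπB_apply, ← Submodule.Quotient.mk_eq_zero (I • (⊤ : Submodule A B)), ← he,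
      LinearEquiv.map_eq_zero_iff]
  -- Step 1 : B is of finite type over A
  obtain ⟨S, hS⟩ := (inferInstance : Algebra.FiniteType (A ⧸ I) ((A ⧸ I) ⊗[A] B)).out
  choose T hT1 hT2 using fun s : S => Submodule.mem_span_finite_of_mem_span (hspan s)
  let Tall : Finset ((A ⧸ I) ⊗[A] B) := Finset.univ.biUnion T
  have hTall_sub : (Tall : Set _) ⊆ Set.range πB := by
    intro t ht
    simp only [Tall, Finset.coe_biUnion, Finset.mem_coe, Finset.mem_univ, Set.iUnion_true,
      Set.mem_iUnion] at ht
    obtain ⟨s, hs⟩ := ht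
    exact hT1 s hs
  choose pre hpre using fun t : Tall => hTall_sub t.2
  let F : Finset B := Finset.univ.image pre
  have hTF : (Tall : Set _) ⊆ πB '' ↑F := by
    intro t ht
    exact ⟨pre ⟨t, ht⟩, by simp [F], hpre ⟨t, ht⟩⟩
  have hadj : Algebra.adjoin (A ⧸ I) (πB '' ↑F) = ⊤ := by
    rw [← top_le_iff, ← hS, Algebra.adjoin_le_iff]
    intro s hs
    have h1 : s ∈ Submodule.span (A ⧸ I) (Tall : Set _) := by
      refine Submodule.span_mono ?_ (hT2 ⟨s, hs⟩)
      intro t ht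
      simp only [Tall, Finset.coe_biUnion, Finset.mem_coe, Finset.mem_univ, Set.iUnion_true,
        Set.mem_iUnion]
      exact ⟨⟨s, hs⟩, ht⟩
    have h2 : Submodule.span (A ⧸ I) (Tall : Set _) ≤
        Subalgebra.toSubmodule (Algebra.adjoin (A ⧸ I) (πB '' ↑F)) := by
      rw [Submodule.span_le]
      exact fun t ht => Algebra.subset_adjoin (hTF ht)
    exact h2 h1
  let C : Subalgebra A ((A ⧸ I) ⊗[A] B) := (Algebra.adjoin A (F : Set B)).map πB
  have halgmem : ∀ a₀ : A ⧸ I, algebraMap (A ⧸ I) ((A ⧸ I) ⊗[A] B) a₀ ∈ C := by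
    intro a₀
    obtain ⟨a, rfl⟩ := Ideal.Quotient.mk_surjective a₀
    refine ⟨algebraMap A B a, Subalgebra.algebraMap_mem _ a, ?_⟩
    have h6 : algebraMap (A ⧸ I) ((A ⧸ I) ⊗[A] B) (Ideal.Quotient.mk I a)
        = algebraMap A ((A ⧸ I) ⊗[A] B) a := by
      rw [IsScalarTower.algebraMap_apply A (A ⧸ I) ((A ⧸ I) ⊗[A] B)]
      rfl
    show πB (algebraMap A B a) = _
    rw [h6, Algebra.TensorProduct.algebraMap_apply', hπB_apply]
  let C' : Subalgebra (A ⧸ I) ((A ⧸ I) ⊗[A] B) :=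
    { C.toSubsemiring with algebraMap_mem' := halgmem }
  have hC' : Algebra.adjoin (A ⧸ I) (πB '' ↑F) ≤ C' := by
    refine Algebra.adjoin_le ?_
    rintro _ ⟨b, hb, rfl⟩
    exact ⟨b, Algebra.subset_adjoin hb, rfl⟩
  have htop : (⊤ : Submodule A B) ≤
      Subalgebra.toSubmodule (Algebra.adjoin A (F : Set B)) ⊔ I • ⊤ := by
    intro b _
    have h1 : πB b ∈ C' := hC' (by rw [hadj]; trivial)
    obtain ⟨y, hy, hy2⟩ := (h1 : πB b ∈ C)
    have h2 : πB (b - y) = 0 := by rw [map_sub, sub_eq_zero]; exact hy2.symm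
    have hz := (hker _).mp h2
    have h3 : b = y + (b - y) := by ring
    rw [h3]
    exact Submodule.add_mem _ (Submodule.mem_sup_left hy) (Submodule.mem_sup_right hz)
  have hFT : Algebra.adjoin A (F : Set B) = ⊤ := by
    have h4 := aux_le_of_le_sup_smul I k hI htop
    exact le_antisymm le_top (fun x hx => h4 trivial)
  haveI hFTB : Algebra.FiniteType A B := ⟨⟨F, hFT⟩⟩
  -- Step 2 : presentation
  obtain ⟨n, φ, hφ⟩ := Algebra.FiniteType.iff_quotient_mvPolynomial''.mp hFTB
  let P := MvPolynomial (Fin n) A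
  let P₀ := MvPolynomial (Fin n) (A ⧸ I)
  let π : P →+* P₀ := MvPolynomial.map (Ideal.Quotient.mk I)
  have hπsurj : Function.Surjective π :=
    MvPolynomial.map_surjective _ Ideal.Quotient.mk_surjective
  have hπker : RingHom.ker π = Ideal.map MvPolynomial.C I := by
    rw [MvPolynomial.ker_map]
    congr 1
    exact Ideal.mk_ker
  let φ₀ : P₀ →ₐ[A ⧸ I] (A ⧸ I) ⊗[A] B :=
    MvPolynomial.aeval (fun i => πB (φ (MvPolynomial.X i)))
  have hcomm : ∀ p : P, φ₀ (π p) = πB (φ p) := by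
    intro p
    have h5 : (φ₀ : P₀ →+* ((A ⧸ I) ⊗[A] B)).comp π
        = (πB : B →+* ((A ⧸ I) ⊗[A] B)).comp (φ : P →+* B) := by
      apply MvPolynomial.ringHom_ext
      · intro a
        have l1 : φ₀ (π (MvPolynomial.C a))
            = algebraMap (A ⧸ I) ((A ⧸ I) ⊗[A] B) (Ideal.Quotient.mk I a) := by
          rw [show π (MvPolynomial.C a) = MvPolynomial.C (Ideal.Quotient.mk I a) from
            MvPolynomial.map_C _ a,
            show (MvPolynomial.C (Ideal.Quotient.mk I a) : P₀)
              = algebraMap (A ⧸ I) P₀ (Ideal.Quotient.mk I a) from rfl]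
          exact φ₀.commutes _
        have l2 : πB (φ (MvPolynomial.C a)) = algebraMap A ((A ⧸ I) ⊗[A] B) a := by
          rw [show (MvPolynomial.C a : P) = algebraMap A P a from rfl, AlgHom.commutes]
          exact πB.commutes a
        simp only [RingHom.comp_apply, RingHom.coe_coe]
        rw [l1, l2, IsScalarTower.algebraMap_apply A (A ⧸ I) ((A ⧸ I) ⊗[A] B)]
        rfl
      · intro i
        show φ₀ (π (MvPolynomial.X i)) = πB (φ (MvPolynomial.X i))
        rw [show π (MvPolynomial.X i) = (MvPolynomial.X i : P₀) from MvPolynomial.map_X _ i]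
        exact MvPolynomial.aeval_X _ i
    exact RingHom.congr_fun h5 p
  have hφ₀surj : Function.Surjective φ₀ := by
    intro x
    have h7 : Submodule.span (A ⧸ I) (Set.range πB) ≤ Subalgebra.toSubmodule φ₀.range := by
      rw [Submodule.span_le]
      rintro _ ⟨b, rfl⟩
      obtain ⟨p, rfl⟩ := hφ b
      exact ⟨π p, hcomm p⟩
    exact h7 (hspan x)
  let J : Ideal P := RingHom.ker φ.toRingHom
  have hJmem : ∀ x : P, x ∈ J ↔ φ x = 0 := fun x => Iff.rfl
  have hK : RingHom.ker φ₀.toRingHom = J.map π := by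
    apply le_antisymm
    · intro u hu
      obtain ⟨x, rfl⟩ := hπsurj u
      have h1 : πB (φ x) = 0 := by rw [← hcomm]; exact hu
      have h2 : φ x ∈ (I • ⊤ : Submodule A B) := (hker _).mp h1
      have h3 : (I • ⊤ : Submodule A B)
          = Submodule.map φ.toLinearMap (I • ⊤ : Submodule A P) := by
        rw [Submodule.map_smul'', Submodule.map_top]
        congr 1
        exact (LinearMap.range_eq_top.mpr hφ).symm
      rw [h3] at h2
      obtain ⟨z, hz, hz2⟩ := h2
      have hxz : x - z ∈ J := by
        rw [hJmem, map_sub, sub_eq_zero]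
        exact hz2.symm
      have hzker : π z = 0 := by
        rw [← RingHom.mem_ker, hπker]
        have h8 : z ∈ (Ideal.map (algebraMap A P) I).restrictScalars A := by
          rw [← Ideal.smul_top_eq_map]
          exact hz
        exact h8
      have h9 : x = (x - z) + z := by ring
      rw [h9, map_add, hzker, add_zero]
      exact Ideal.mem_map_of_mem π hxz
    · rw [Ideal.map_le_iff_le_comap]
      intro x hx
      show φ₀ (π x) = 0
      rw [hcomm, (hJmem x).mp hx, map_zero]
  haveI : Algebra.FinitePresentation (A ⧸ I) P₀ :=
    Algebra.FinitePresentation.mvPolynomial (R := A ⧸ I) (A := A ⧸ I) (ι := Fin n)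
  have hKfg : (RingHom.ker φ₀.toRingHom).FG :=
    Algebra.FinitePresentation.ker_fG_of_surjective φ₀ hφ₀surj
  obtain ⟨G, hG⟩ := hKfg
  have hGmem : ∀ g ∈ G, (g : P₀) ∈ Ideal.span (π '' (J : Set P)) := by
    intro g hg
    have h10 : (g : P₀) ∈ RingHom.ker φ₀.toRingHom := by
      rw [← hG]
      exact Ideal.subset_span hg
    rw [hK] at h10
    exact h10
  choose TG hTG1 hTG2 using
    fun g : G => Submodule.mem_span_finite_of_mem_span (hGmem g g.2)
  let Tall2 : Finset P₀ := Finset.univ.biUnion TG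
  have hTall2 : (Tall2 : Set P₀) ⊆ π '' (J : Set P) := by
    intro t ht
    simp only [Tall2, Finset.coe_biUnion, Finset.mem_coe, Finset.mem_univ, Set.iUnion_true,
      Set.mem_iUnion] at ht
    obtain ⟨g, hg⟩ := ht
    exact hTG1 g hg
  choose pre2 hpre2a hpre2b using fun t : Tall2 => hTall2 t.2
  let FJ : Finset P := Finset.univ.image pre2
  let J' : Ideal P := Ideal.span (FJ : Set P)
  have hJ'le : J' ≤ J := by
    rw [Ideal.span_le]
    intro x hx
    simp only [FJ, Finset.coe_image, Finset.coe_univ, Set.image_univ, Set.mem_range] at hx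
    obtain ⟨t, rfl⟩ := hx
    exact hpre2a t
  have hKle : RingHom.ker φ₀.toRingHom ≤ J'.map π := by
    rw [← hG, Ideal.span_le]
    intro g hg
    have h11 : (g : P₀) ∈ Ideal.span (Tall2 : Set P₀) := by
      refine Submodule.span_mono ?_ (hTG2 ⟨g, hg⟩)
      intro t ht
      simp only [Tall2, Finset.coe_biUnion, Finset.mem_coe, Finset.mem_univ, Set.iUnion_true,
        Set.mem_iUnion]
      exact ⟨⟨g, hg⟩, ht⟩
    have h12 : (Tall2 : Set P₀) ⊆ ↑(J'.map π) := by
      intro t ht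
      have hmem : π (pre2 ⟨t, ht⟩) ∈ J'.map π :=
        Ideal.mem_map_of_mem π (Ideal.subset_span (by simp [FJ]))
      rw [hpre2b ⟨t, ht⟩] at hmem
      exact hmem
    exact (Ideal.span_le.mpr h12) h11
  -- the key flatness step and nilpotent Nakayama
  have hmain : J ≤ J' := by
    have h13 : Submodule.restrictScalars A (J : Submodule P P) ≤
        Submodule.restrictScalars A (J' : Submodule P P) ⊔
          I • Submodule.restrictScalars A (J : Submodule P P) := by
      intro x hx
      have hxJ : x ∈ J := hx
      have h14 : π x ∈ J'.map π := by
        refine hKle ?_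
        show φ₀ (π x) = 0
        rw [hcomm, (hJmem x).mp hxJ, map_zero]
      have h15 : x ∈ J' ⊔ RingHom.ker π := by
        have h16 := Ideal.comap_map_of_surjective π hπsurj J'
        have h17 : x ∈ Ideal.comap π (J'.map π) := h14
        rw [h16] at h17
        exact h17
      obtain ⟨y, hy, z, hz, hyz⟩ := Submodule.mem_sup.mp h15
      have hzJ : z ∈ J := by
        have hyJ : y ∈ J := hJ'le hy
        have : z = x - y := by rw [← hyz]; ring
        rw [this]
        exact Ideal.sub_mem _ hxJ hyJ
      have hzI : z ∈ (I • ⊤ : Submodule A P) := by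
        rw [Ideal.smul_top_eq_map]
        rw [hπker] at hz
        exact hz
      have hkerEq : LinearMap.ker φ.toLinearMap
          = Submodule.restrictScalars A (J : Submodule P P) := by
        ext w
        exact Iff.rfl
      have hzIJ : z ∈ I • Submodule.restrictScalars A (J : Submodule P P) := by
        rw [← hkerEq]
        exact aux_ker_inf_smul_top_le φ.toLinearMap hφ I ⟨by rw [hkerEq]; exact hzJ, hzI⟩
      exact Submodule.mem_sup.mpr ⟨y, hy, z, hzIJ, hyz⟩
    have h18 := aux_le_of_le_sup_smul I k hI h13
    exact fun x hx => h18 hx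
  have hJfg : J.FG := by
    refine ⟨FJ, le_antisymm ?_ ?_⟩
    · exact hJ'le
    · exact hmain
  exact Algebra.FinitePresentation.of_surjective hφ hJfg
end

section
/- Given ring homomorphisms A → B/J and B → B/J (the quotient map) where J is an ideal of B, the natural map A ⊗_{A ×_{B/J} B} B → B/J is an isomorphism; equivalently, the cocartesian square formed by the fiber product ring A ×_{B/J} B with its projections to A and B and the maps to B/J is also cartesian in the sense that A ⊗_{(A ×_{B/J} B)} B ≅ B/J. -/
open TensorProduct

section

variable (A B : Type*) [CommRing A] [CommRing B] (J : Ideal B) (f : A →+* B ⧸ J)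

/-- The fiber product ring `R = A ×_{B/J} B`, realized as the subring of `A × B`
consisting of pairs with equal image in `B/J`. -/
noncomputable def fiberProd : Subring (A × B) :=
  RingHom.eqLocus (f.comp (RingHom.fst A B)) ((Ideal.Quotient.mk J).comp (RingHom.snd A B))

noncomputable instance : Algebra (fiberProd A B J f) A :=
  ((RingHom.fst A B).comp (fiberProd A B J f).subtype).toAlgebra

noncomputable instance : Algebra (fiberProd A B J f) B :=
  ((RingHom.snd A B).comp (fiberProd A B J f).subtype).toAlgebra

noncomputable instance : Algebra (fiberProd A B J f) (B ⧸ J) :=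
  (((Ideal.Quotient.mk J).comp (RingHom.snd A B)).comp (fiberProd A B J f).subtype).toAlgebra

/-- `f : A → B/J` as a map of `R = A ×_{B/J} B`-algebras. -/
noncomputable def fiberProdFst : A →ₐ[fiberProd A B J f] (B ⧸ J) :=
  { toRingHom := f, commutes' := fun r => r.2 }

/-- The quotient map `B → B/J` as a map of `R = A ×_{B/J} B`-algebras. -/
noncomputable def fiberProdSnd : B →ₐ[fiberProd A B J f] (B ⧸ J) :=
  { toRingHom := Ideal.Quotient.mk J, commutes' := fun _ => rfl }

lemma fiberProd_key (r : fiberProd A B J f) (b : B) :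
    (algebraMap (fiberProd A B J f) A r) ⊗ₜ[fiberProd A B J f] b
      = 1 ⊗ₜ[fiberProd A B J f] (algebraMap (fiberProd A B J f) B r * b) := by
  have h : (algebraMap (fiberProd A B J f) A r) ⊗ₜ[fiberProd A B J f] (1 : B)
      = (1 : A) ⊗ₜ[fiberProd A B J f] (algebraMap (fiberProd A B J f) B r) :=
    (Algebra.TensorProduct.includeLeft.commutes r).trans
      (Algebra.TensorProduct.includeRight.commutes r).symm
  calc (algebraMap (fiberProd A B J f) A r) ⊗ₜ[fiberProd A B J f] b
      = ((algebraMap (fiberProd A B J f) A r) ⊗ₜ[fiberProd A B J f] (1 : B))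
          * ((1 : A) ⊗ₜ[fiberProd A B J f] b) := by
        rw [Algebra.TensorProduct.tmul_mul_tmul, mul_one, one_mul]
    _ = ((1 : A) ⊗ₜ[fiberProd A B J f] (algebraMap (fiberProd A B J f) B r))
          * ((1 : A) ⊗ₜ[fiberProd A B J f] b) := by rw [h]
    _ = 1 ⊗ₜ[fiberProd A B J f] (algebraMap (fiberProd A B J f) B r * b) := by
        rw [Algebra.TensorProduct.tmul_mul_tmul, one_mul]

lemma fiberProd_exists_tmul (x : A ⊗[fiberProd A B J f] B) :
    ∃ b : B, x = 1 ⊗ₜ b := by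
  induction x with
  | zero => exact ⟨0, by simp [TensorProduct.tmul_zero]⟩
  | tmul a b =>
    obtain ⟨b', hb'⟩ := Ideal.Quotient.mk_surjective (f a)
    have hr : (a, b') ∈ fiberProd A B J f := hb'.symm
    refine ⟨b' * b, ?_⟩
    have := fiberProd_key A B J f ⟨(a, b'), hr⟩ b
    exact this
  | add x y hx hy =>
    obtain ⟨b1, rfl⟩ := hx
    obtain ⟨b2, rfl⟩ := hy
    exact ⟨b1 + b2, by rw [TensorProduct.tmul_add]⟩

/-- For ring homomorphisms `A → B/J` and `B → B/J` (the quotient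
map), with `R = A ×_{B/J} B` the fiber product ring, the natural map
`A ⊗_R B → B/J`, `a ⊗ b ↦ f(a) · (b mod J)`, is an isomorphism; i.e. the
cocartesian square given by the fiber product is also cartesian. -/
theorem fiberProd_tensor_bijective :
    Function.Bijective
      (@Algebra.TensorProduct.lift _ _ _ _ _ _ _ _ _ _ _ _ _ _ _ _ _ (IsScalarTower.left _) (fiberProdFst A B J f) (fiberProdSnd A B J f)
        (fun _ _ => Commute.all _ _)) := by
  constructor
  · rw [injective_iff_map_eq_zero]
    intro x hx
    obtain ⟨b, rfl⟩ := fiberProd_exists_tmul A B J f x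
    have hb : b ∈ J := by
      simp [Algebra.TensorProduct.lift_tmul, fiberProdFst, fiberProdSnd] at hx
      exact (Ideal.Quotient.eq_zero_iff_mem).mp
        (by have h1 : f 1 * Ideal.Quotient.mk J b = 0 := hx; simpa using h1)
    have hr : ((0 : A), b) ∈ fiberProd A B J f := by
      show f 0 = Ideal.Quotient.mk J b
      rw [map_zero, Ideal.Quotient.eq_zero_iff_mem.mpr hb]
    have := fiberProd_key A B J f ⟨((0 : A), b), hr⟩ 1
    have h0 : algebraMap (fiberProd A B J f) A ⟨((0 : A), b), hr⟩ = 0 := rfl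
    have hb2 : algebraMap (fiberProd A B J f) B ⟨((0 : A), b), hr⟩ = b := rfl
    rw [h0, hb2, mul_one, TensorProduct.zero_tmul] at this
    rw [← this]
  · intro y
    obtain ⟨b, rfl⟩ := Ideal.Quotient.mk_surjective y
    exact ⟨1 ⊗ₜ b, by
      simp [Algebra.TensorProduct.lift_tmul, fiberProdFst, fiberProdSnd]
      exact (by simp : f 1 * Ideal.Quotient.mk J b = Ideal.Quotient.mk J b)⟩

end
end

section
/- Consider a commutative triangle of schemes f : X → Y, g : X → Z, h : Y → Z with h ∘ f = g, where f and g are quasi-compact, quasi-separated, surjective, universally closed, with geometrically connected fibers, and moreover f and g are Stein (i.e. O_Y → f_*O_X and O_Z → g_*O_X are isomorphisms). If h has discrete fibers, then h is an isomorphism. -/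
open AlgebraicGeometry CategoryTheory Limits

/-- A morphism of schemes has geometrically connected fibers if for every
algebraically closed field `K` and every morphism `Spec K → Y`, the base change
`X ×_Y Spec K` is a connected (topological) space. -/
def HasGeomConnectedFibers {X Y : AlgebraicGeometry.Scheme}
    (f : X ⟶ Y) : Prop :=
  ∀ (K : Type) (_ : Field K) (_ : IsAlgClosed K)
    (g : Spec (CommRingCat.of K) ⟶ Y), ConnectedSpace ↥(pullback f g)

/-- A morphism of schemes `f : X → Y` is Stein if the canonical map
`O_Y → f_* O_X` is an isomorphism, i.e. `O_Y(U) → O_X(f⁻¹ U)` is an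
isomorphism for every open `U ⊆ Y`. -/
def IsSteinMorphism {X Y : AlgebraicGeometry.Scheme} (f : X ⟶ Y) : Prop :=
  ∀ U : Y.Opens, IsIso (f.app U)

lemma fiber_preconnected_aux {X Z : AlgebraicGeometry.Scheme} (g : X ⟶ Z)
    (hgc : ∀ (K : Type) (_ : Field K) (_ : IsAlgClosed K)
      (q : Spec (CommRingCat.of K) ⟶ Z), ConnectedSpace ↥(pullback g q)) (z : Z) :
    _root_.IsPreconnected {x : ↥X | g.base x = z} := by
  let K : Type := AlgebraicClosure ↥(Z.residueField z)
  let q : Spec (CommRingCat.of K) ⟶ Z :=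
    Spec.map (CommRingCat.ofHom (algebraMap ↥(Z.residueField z) K)) ≫ Z.fromSpecResidueField z
  have hq : ∀ t, q.base t = z := by
    intro t
    show (Z.fromSpecResidueField z).base _ = z
    exact Scheme.fromSpecResidueField_apply z _
  haveI := hgc K inferInstance inferInstance q
  have hrange : {x : ↥X | g.base x = z} = Set.range (pullback.fst g q).base := by
    ext x
    constructor
    · intro hx
      have t0 : ↥(Spec (CommRingCat.of K)) := (⟨⊥, Ideal.bot_prime⟩ : PrimeSpectrum K)
      obtain ⟨w, hw1, _⟩ := Scheme.Pullback.exists_preimage_pullback x t0 (by rw [hx, hq])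
      exact ⟨w, hw1⟩
    · rintro ⟨w, rfl⟩
      show g.base ((pullback.fst g q).base w) = z
      rw [← Scheme.Hom.comp_apply, pullback.condition, Scheme.Hom.comp_apply, hq]
  rw [hrange, ← Set.image_univ]
  exact (isPreconnected_univ).image _ (pullback.fst g q).base.hom.continuous.continuousOn

/-- Given a commutative triangle of schemes `h ∘ f = g` with `f`
and `g` quasi-compact, quasi-separated, surjective, universally closed, Stein,
and with geometrically connected fibers, if `h : Y → Z` has discrete fibers
then `h` is an isomorphism. -/
theorem isIso_of_discreteFibers_of_stein
    (X Y Z : AlgebraicGeometry.Scheme) (f : X ⟶ Y) (g : X ⟶ Z) (h : Y ⟶ Z)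
    (hcomm : f ≫ h = g)
    [QuasiCompact f] [QuasiSeparated f] [AlgebraicGeometry.Surjective f]
    [UniversallyClosed f] (hfc : HasGeomConnectedFibers f)
    (hfs : IsSteinMorphism f)
    [QuasiCompact g] [QuasiSeparated g] [AlgebraicGeometry.Surjective g]
    [UniversallyClosed g] (hgc : HasGeomConnectedFibers g)
    (hgs : IsSteinMorphism g)
    (hdisc : ∀ z : Z, DiscreteTopology { y : Y // h.base y = z }) :
    IsIso h := by
  subst hcomm
  -- surjectivity of h
  have hsurj : Function.Surjective h.base := by
    intro z
    obtain ⟨x, hx⟩ := (f ≫ h).surjective z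
    exact ⟨f.base x, by rw [← hx, Scheme.Hom.comp_apply]⟩
  -- fibers of h as images of fibers of g
  have hfib : ∀ z : Z, {y : ↥Y | h.base y = z} = f.base '' {x : ↥X | (f ≫ h).base x = z} := by
    intro z
    ext y
    constructor
    · intro hy
      obtain ⟨x, hx⟩ := f.surjective y
      refine ⟨x, ?_, hx⟩
      show (f ≫ h).base x = z
      rw [Scheme.Hom.comp_apply, hx]
      exact hy
    · rintro ⟨x, hx, rfl⟩
      show h.base (f.base x) = z
      rw [← Scheme.Hom.comp_apply]
      exact hx
  -- injectivity of h
  have hinj : Function.Injective h.base := by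
    intro y₁ y₂ e
    set z := h.base y₂ with hz
    have hS : _root_.IsPreconnected {y : ↥Y | h.base y = z} := by
      rw [hfib z]
      exact (fiber_preconnected_aux (f ≫ h) hgc z).image _ f.base.hom.continuous.continuousOn
    haveI : PreconnectedSpace ↥{y : ↥Y | h.base y = z} := Subtype.preconnectedSpace hS
    haveI : DiscreteTopology ↥{y : ↥Y | h.base y = z} := hdisc z
    have h1 : (⟨y₁, e⟩ : {y : ↥Y | h.base y = z}) = ⟨y₂, rfl⟩ := by
      have hcl : IsClopen ({⟨y₁, e⟩} : Set {y : ↥Y | h.base y = z}) := isClopen_discrete _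
      have := hcl.eq_univ ⟨⟨y₁, e⟩, rfl⟩
      have : (⟨y₂, rfl⟩ : {y : ↥Y | h.base y = z}) ∈
          ({⟨y₁, e⟩} : Set {y : ↥Y | h.base y = z}) := this ▸ Set.mem_univ _
      exact (Set.mem_singleton_iff.mp this).symm
    exact congrArg Subtype.val h1
  -- h is a closed map
  have hcl : IsClosedMap h.base := by
    intro C hC
    have himg : h.base '' C = (f ≫ h).base '' (f.base ⁻¹' C) := by
      ext w
      simp only [Set.mem_image, Set.mem_preimage]
      constructor
      · rintro ⟨y, hy, rfl⟩
        obtain ⟨x, rfl⟩ := f.surjective y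
        exact ⟨x, hy, by rw [Scheme.Hom.comp_apply]⟩
      · rintro ⟨x, hx, rfl⟩
        exact ⟨f.base x, hx, (Scheme.Hom.comp_apply f h x).symm⟩
    rw [himg]
    exact (f ≫ h).isClosedMap _ (hC.preimage f.base.hom.continuous)
  haveI hbase : IsIso h.base :=
    TopCat.isIso_of_bijective_of_isClosedMap h.base ⟨hinj, hsurj⟩ hcl
  -- sheaf components
  have happ : ∀ U : Z.Opens, IsIso (h.app U) := by
    intro U
    haveI h2 : IsIso (f.app (h ⁻¹ᵁ U)) := hfs _
    haveI h1 : IsIso (h.app U ≫ f.app (h ⁻¹ᵁ U)) := by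
      have e : (f ≫ h).app U = h.app U ≫ f.app (h ⁻¹ᵁ U) := Scheme.Hom.comp_app f h U
      rw [← e]
      exact hgs U
    exact IsIso.of_isIso_comp_right (h.app U) (f.app (h ⁻¹ᵁ U))
  haveI : IsIso h.toPshHom.c := by
    apply NatIso.isIso_of_isIso_app
  haveI : IsIso h.toPshHom := by
    haveI : IsIso h.toPshHom.base := hbase
    exact PresheafedSpace.isIso_of_components _
  haveI : IsIso (SheafedSpace.forgetToPresheafedSpace.map h.toLRSHom.toShHom) := by
    show IsIso h.toPshHom
    infer_instance
  haveI : IsIso h.toLRSHom.toShHom :=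
    isIso_of_reflects_iso h.toLRSHom.toShHom SheafedSpace.forgetToPresheafedSpace
  haveI : IsIso (LocallyRingedSpace.forgetToSheafedSpace.map h.toLRSHom) := by
    show IsIso h.toLRSHom.toShHom
    infer_instance
  haveI : IsIso h.toLRSHom :=
    isIso_of_reflects_iso h.toLRSHom LocallyRingedSpace.forgetToSheafedSpace
  haveI : IsIso (Scheme.forgetToLocallyRingedSpace.map h) := by
    show IsIso h.toLRSHom
    infer_instance
  exact isIso_of_reflects_iso h Scheme.forgetToLocallyRingedSpace
end

section
/- Let k be a field and let X be the affine line with doubled origin over k, with the two open charts j_s, j_t : 𝔸¹ → X. The morphism Spec k[[x]] → X ×_k Spec k[[x]] over Spec k[[x]] induced by the first chart via x ↦ x is not a closed immersion, even though its restriction over the closed point x = 0 is a closed immersion (the inclusion of one of the two origins). -/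
open AlgebraicGeometry CategoryTheory Limits

noncomputable section

variable (k : Type) [Field k]

/-- The affine line `𝔸¹ = Spec k[y]`. -/
def AffLine : AlgebraicGeometry.Scheme := Spec (CommRingCat.of (Polynomial k))

/-- The structure morphism `𝔸¹ → Spec k`. -/
def affLineStruct : AffLine k ⟶ Spec (CommRingCat.of k) :=
  Spec.map (CommRingCat.ofHom (algebraMap k (Polynomial k)))

/-- The punctured affine line `𝔸¹ ∖ {0} = Spec k[y]_y`, with its open immersion
into `𝔸¹`. -/
def puncturedLineIncl :
    Spec (CommRingCat.of (Localization.Away (Polynomial.X : Polynomial k))) ⟶ AffLine k :=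
  Spec.map (CommRingCat.ofHom
    (algebraMap (Polynomial k) (Localization.Away (Polynomial.X : Polynomial k))))

/-- The morphism `Spec k[[x]] → 𝔸¹` given on rings by `y ↦ x`. -/
def powerSeriesSection : Spec (CommRingCat.of (PowerSeries k)) ⟶ AffLine k :=
  Spec.map (CommRingCat.ofHom
    ((Polynomial.aeval (PowerSeries.X : PowerSeries k)).toRingHom))

/-- The inclusion of the origin `Spec k → 𝔸¹`, given on rings by `y ↦ 0`. -/
def originSection : Spec (CommRingCat.of k) ⟶ AffLine k :=
  Spec.map (CommRingCat.ofHom ((Polynomial.aeval (0 : k)).toRingHom))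

/- ---------- auxiliary lemmas ---------- -/

lemma range_puncturedLineIncl :
    Set.range (puncturedLineIncl k).base =
      (PrimeSpectrum.basicOpen (Polynomial.X : Polynomial k) :
        Set (PrimeSpectrum (Polynomial k))) := by
  show Set.range (PrimeSpectrum.comap
      (algebraMap (Polynomial k) (Localization.Away (Polynomial.X : Polynomial k)))) = _
  exact PrimeSpectrum.localization_away_comap_range _ _

/-- Key topological consequence of the gluing square: if `js p` lies in the image of the
other chart, then `p` lies in the punctured line, i.e. `X ∉ p`. -/
lemma key_not_mem {X : Scheme} {js jt : AffLine k ⟶ X}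
    [IsOpenImmersion js] [IsOpenImmersion jt]
    (hglue : IsPullback (puncturedLineIncl k) (puncturedLineIncl k) js jt)
    (p : AffLine k) (hp : js.base p ∈ Set.range jt.base) :
    (Polynomial.X : Polynomial k) ∉ (p : PrimeSpectrum (Polynomial k)).asIdeal := by
  have h1 : puncturedLineIncl k = hglue.isoPullback.hom ≫ pullback.fst js jt :=
    hglue.isoPullback_hom_fst.symm
  have hsurj : Function.Surjective (hglue.isoPullback.hom.base) :=
    (TopCat.homeoOfIso (Scheme.forgetToTop.mapIso hglue.isoPullback)).surjective
  have h2 : Set.range (puncturedLineIncl k).base = Set.range (pullback.fst js jt).base := by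
    rw [h1, Scheme.Hom.comp_base, TopCat.coe_comp, Set.range_comp,
      Set.range_eq_univ.mpr hsurj, Set.image_univ]
  have h3 : p ∈ Set.range (puncturedLineIncl k).base := by
    rw [h2, IsOpenImmersion.range_pullbackFst]
    exact hp
  rw [range_puncturedLineIncl] at h3
  exact (PrimeSpectrum.mem_basicOpen _ _).mp h3

/-- The ideal of the origin point of the affine line. -/
lemma origin_asIdeal :
    ((originSection k).base (default : Spec (CommRingCat.of k)) :
        PrimeSpectrum (Polynomial k)).asIdeal =
      Ideal.span {(Polynomial.X : Polynomial k)} := by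
  show Ideal.comap ((Polynomial.aeval (0 : k)).toRingHom)
      (default : Spec (CommRingCat.of k)).asIdeal = _
  show Ideal.comap ((Polynomial.aeval (0 : k)).toRingHom) ⊥ = _
  rw [← RingHom.ker_eq_comap_bot]
  have : ((Polynomial.aeval (0 : k)).toRingHom : Polynomial k →+* k) =
      Polynomial.evalRingHom 0 := Polynomial.coe_aeval_eq_evalRingHom 0
  rw [this, Polynomial.ker_evalRingHom]
  simp

lemma origin_isMaximal :
    (Ideal.span {(Polynomial.X : Polynomial k)}).IsMaximal := by
  have : Ideal.span {(Polynomial.X : Polynomial k)} =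
      RingHom.ker (Polynomial.evalRingHom (0 : k)) := by
    rw [Polynomial.ker_evalRingHom]; simp
  rw [this]
  exact RingHom.ker_isMaximal_of_surjective _ (fun a => ⟨Polynomial.C a, by simp⟩)

/-- Second part: `originSection ≫ js` is a closed immersion. -/
lemma originSection_js_isClosedImmersion {X : Scheme} (js jt : AffLine k ⟶ X)
    [IsOpenImmersion js] [IsOpenImmersion jt]
    (hglue : IsPullback (puncturedLineIncl k) (puncturedLineIncl k) js jt)
    (hcover : Set.range js.base ∪ Set.range jt.base = Set.univ) :
    IsClosedImmersion (originSection k ≫ js) := by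
  haveI : IsClosedImmersion (originSection k) := by
    apply IsClosedImmersion.spec_of_surjective
    intro a
    exact ⟨Polynomial.C a, by simp⟩
  apply IsClosedImmersion.of_isPreimmersion
  set o : AffLine k := (originSection k).base (default : Spec (CommRingCat.of k)) with ho
  have hrange : Set.range (originSection k ≫ js).base = {js.base o} := by
    rw [Scheme.Hom.comp_base, TopCat.coe_comp, Set.range_comp, Set.range_unique, Set.image_singleton]
  rw [hrange, ← isOpen_compl_iff]
  have hXo : (Polynomial.X : Polynomial k) ∈ (o : PrimeSpectrum (Polynomial k)).asIdeal := by
    rw [ho, origin_asIdeal]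
    exact Ideal.subset_span rfl
  have hcompl : ({js.base o}ᶜ : Set X) =
      js.base '' (PrimeSpectrum.basicOpen (Polynomial.X : Polynomial k) :
        Set (PrimeSpectrum (Polynomial k))) ∪ Set.range jt.base := by
    ext z
    simp only [Set.mem_compl_iff, Set.mem_singleton_iff, Set.mem_union, Set.mem_image]
    constructor
    · intro hz
      have hz2 : z ∈ Set.range js.base ∪ Set.range jt.base := by
        rw [hcover]; trivial
      rcases hz2 with ⟨p, rfl⟩ | hz2
      · left
        refine ⟨p, ?_, rfl⟩
        change (Polynomial.X : Polynomial k) ∉ (p : PrimeSpectrum (Polynomial k)).asIdeal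
        intro hXp
        apply hz
        congr 1
        apply PrimeSpectrum.ext
        rw [ho, origin_asIdeal]
        symm
        exact (origin_isMaximal k).eq_of_le
          (p : PrimeSpectrum (Polynomial k)).isPrime.ne_top
          ((Ideal.span_singleton_le_iff_mem _).mpr hXp)
      · right; exact hz2
    · rintro (⟨p, hpX, rfl⟩ | ⟨p, rfl⟩)
      · intro hz
        have : p = o := js.isOpenEmbedding.injective hz
        change (Polynomial.X : Polynomial k) ∉ (p : PrimeSpectrum (Polynomial k)).asIdeal at hpX
        exact hpX (this ▸ hXo)
      · intro hz
        have : js.base o ∈ Set.range jt.base := ⟨p, hz⟩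
        exact key_not_mem k hglue o this hXo
  rw [hcompl]
  exact (js.isOpenEmbedding.isOpenMap _ (PrimeSpectrum.basicOpen _).2).union
    jt.isOpenEmbedding.isOpen_range

/-- First part: the graph morphism into the doubled-line fibre product is not a
closed immersion. -/
lemma not_isClosedImmersion_lift {X : Scheme} (js jt : AffLine k ⟶ X)
    [IsOpenImmersion js] [IsOpenImmersion jt]
    (q : X ⟶ Spec (CommRingCat.of k))
    (hqs : js ≫ q = affLineStruct k) (hqt : jt ≫ q = affLineStruct k)
    (hglue : IsPullback (puncturedLineIncl k) (puncturedLineIncl k) js jt)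
    (w : (powerSeriesSection k ≫ js) ≫ q = 𝟙 _ ≫ (powerSeriesSection k ≫ js ≫ q)) :
    ¬ IsClosedImmersion
        (pullback.lift (powerSeriesSection k ≫ js) (𝟙 _) w :
          Spec (CommRingCat.of (PowerSeries k)) ⟶
            pullback q (powerSeriesSection k ≫ js ≫ q)) := by
  intro hCI
  set ψ := powerSeriesSection k with hψ
  set f : Spec (CommRingCat.of (PowerSeries k)) ⟶ pullback q (ψ ≫ js ≫ q) :=
    pullback.lift (ψ ≫ js) (𝟙 _) w with hf
  have w2 : (ψ ≫ jt) ≫ q = 𝟙 _ ≫ (ψ ≫ js ≫ q) := by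
    simp only [Category.id_comp, Category.assoc, hqt, hqs]
  set h : Spec (CommRingCat.of (PowerSeries k)) ⟶ pullback q (ψ ≫ js ≫ q) :=
    pullback.lift (ψ ≫ jt) (𝟙 _) w2 with hh
  -- the generic fibre
  set ι : Spec (CommRingCat.of (FractionRing (PowerSeries k))) ⟶ Spec (CommRingCat.of (PowerSeries k)) :=
    Spec.map (CommRingCat.ofHom (algebraMap (PowerSeries k) (FractionRing (PowerSeries k)))) with hι
  have hXunit : IsUnit (algebraMap (PowerSeries k) (FractionRing (PowerSeries k)) PowerSeries.X) := by
    rw [isUnit_iff_ne_zero]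
    intro h0
    have : (PowerSeries.X : PowerSeries k) = 0 :=
      IsFractionRing.injective (PowerSeries k) (FractionRing (PowerSeries k)) (by rw [h0, map_zero])
    exact PowerSeries.X_ne_zero this
  set g0 : Polynomial k →+* (FractionRing (PowerSeries k)) :=
    (algebraMap (PowerSeries k) (FractionRing (PowerSeries k))).comp
      (Polynomial.aeval (PowerSeries.X : PowerSeries k)).toRingHom with hg0
  have hunits : ∀ y : Submonoid.powers (Polynomial.X : Polynomial k), IsUnit (g0 y) := by
    rintro ⟨y, n, rfl⟩
    have : g0 (Polynomial.X ^ n) = (algebraMap (PowerSeries k) (FractionRing (PowerSeries k)) PowerSeries.X) ^ n := by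
      simp [hg0]
    rw [this]
    exact hXunit.pow n
  set φ : Localization.Away (Polynomial.X : Polynomial k) →+* (FractionRing (PowerSeries k)) :=
    IsLocalization.lift (M := Submonoid.powers (Polynomial.X : Polynomial k)) hunits with hφdef
  have hφ : φ.comp (algebraMap (Polynomial k)
      (Localization.Away (Polynomial.X : Polynomial k))) = g0 :=
    IsLocalization.lift_comp hunits
  have hfac : ι ≫ ψ = Spec.map (CommRingCat.ofHom φ) ≫ puncturedLineIncl k := by
    rw [hψ, powerSeriesSection, puncturedLineIncl, hι]
    unfold AffLine
    rw [← Spec.map_comp, ← Spec.map_comp]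
    congr 1
    exact congrArg CommRingCat.ofHom hφ.symm
  have hιfh : ι ≫ f = ι ≫ h := by
    apply pullback.hom_ext
    · simp only [hf, hh, Category.assoc, pullback.lift_fst]
      rw [← Category.assoc, ← Category.assoc, hfac, Category.assoc, Category.assoc, hglue.w]
    · rw [hf, hh, Category.assoc, Category.assoc, pullback.lift_snd, pullback.lift_snd]
  -- points
  set c : Spec (CommRingCat.of (PowerSeries k)) :=
    IsLocalRing.closedPoint (PowerSeries k) with hc
  set η : Spec (CommRingCat.of (PowerSeries k)) := ι.base default with hηdef
  have hη : f.base η = h.base η := by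
    have := congrArg (fun g : Spec (CommRingCat.of (FractionRing (PowerSeries k))) ⟶
        pullback q (ψ ≫ js ≫ q) => g.base default) hιfh
    simpa using this
  have hspec : η ⤳ c :=
    IsLocalRing.specializes_closedPoint (R := PowerSeries k) (η : PrimeSpectrum (PowerSeries k))
  have hcc : h.base c ∈ closure {f.base η} := by
    rw [hη]
    exact specializes_iff_mem_closure.mp (hspec.map h.continuous)
  have hrange : closure {f.base η} ⊆ Set.range f.base :=
    hCI.base_closed.isClosed_range.closure_subset_iff.mpr
      (Set.singleton_subset_iff.mpr ⟨η, rfl⟩)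
  obtain ⟨p, hp⟩ := hrange hcc
  have hpc : p = c := by
    have h1 := congrArg (pullback.snd q (ψ ≫ js ≫ q)).base hp
    have h2 : (f ≫ pullback.snd q (ψ ≫ js ≫ q)).base p =
        (h ≫ pullback.snd q (ψ ≫ js ≫ q)).base c := by
      exact h1
    rw [hf, hh, pullback.lift_snd, pullback.lift_snd] at h2
    simpa [hf, hh] using h2
  rw [hpc] at hp
  have hfst : js.base (ψ.base c) = jt.base (ψ.base c) := by
    have h1 := congrArg (pullback.fst q (ψ ≫ js ≫ q)).base hp
    have h2 : (f ≫ pullback.fst q (ψ ≫ js ≫ q)).base c =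
        (h ≫ pullback.fst q (ψ ≫ js ≫ q)).base c := by
      exact h1
    rw [hf, hh, pullback.lift_fst, pullback.lift_fst] at h2
    simpa [hf, hh, Scheme.Hom.comp_apply] using h2
  have hmem : js.base (ψ.base c) ∈ Set.range jt.base := ⟨_, hfst.symm⟩
  apply key_not_mem k hglue (ψ.base c) hmem
  show Polynomial.X ∈ Ideal.comap ((Polynomial.aeval (PowerSeries.X : PowerSeries k)).toRingHom)
    (c : PrimeSpectrum (PowerSeries k)).asIdeal
  rw [Ideal.mem_comap]
  have hmax : (PowerSeries.X : PowerSeries k) ∈ IsLocalRing.maximalIdeal (PowerSeries k) := by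
    rw [IsLocalRing.mem_maximalIdeal, mem_nonunits_iff, PowerSeries.isUnit_iff_constantCoeff]
    simp
  simpa [hc, IsLocalRing.closedPoint] using hmax

/-- Let `X` be the affine line with doubled origin over a field
`k`: a scheme with two open charts `js, jt : 𝔸¹ → X` over `Spec k`, covering
`X`, whose intersection is `𝔸¹ ∖ {0}` glued by the identity (expressed as a
pullback square). The morphism `Spec k[[x]] → X ×_k Spec k[[x]]` over
`Spec k[[x]]`, induced via the first chart by `y ↦ x`, is not a closed
immersion; nevertheless its restriction over the closed point `x = 0` — the
corresponding morphism `Spec k → X ×_k Spec k` induced by the inclusion of one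
of the two origins — is a closed immersion. -/
theorem doubledOrigin_not_closedImmersion
    (X : AlgebraicGeometry.Scheme)
    (js jt : AffLine k ⟶ X) [IsOpenImmersion js] [IsOpenImmersion jt]
    (q : X ⟶ Spec (CommRingCat.of k))
    (hqs : js ≫ q = affLineStruct k) (hqt : jt ≫ q = affLineStruct k)
    (hglue : IsPullback (puncturedLineIncl k) (puncturedLineIncl k) js jt)
    (hcover : Set.range js.base ∪ Set.range jt.base = Set.univ) :
    ¬ IsClosedImmersion
        (pullback.lift (powerSeriesSection k ≫ js) (𝟙 _)
          (by simp) : Spec (CommRingCat.of (PowerSeries k)) ⟶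
            pullback q (powerSeriesSection k ≫ js ≫ q)) ∧
      IsClosedImmersion
        (pullback.lift (originSection k ≫ js) (𝟙 _)
          (by simp) : Spec (CommRingCat.of k) ⟶
            pullback q (originSection k ≫ js ≫ q)) := by
  constructor
  · exact not_isClosedImmersion_lift k js jt q hqs hqt hglue (by simp)
  · have hcmp : CommRingCat.ofHom (algebraMap k (Polynomial k)) ≫
        CommRingCat.ofHom ((Polynomial.aeval (0 : k)).toRingHom) =
          𝟙 (CommRingCat.of k) := by
      ext a
      show (Polynomial.aeval (0 : k)) (algebraMap k (Polynomial k) a) = a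
      simp
    have hg2 : originSection k ≫ js ≫ q = 𝟙 (Spec (CommRingCat.of k)) := by
      rw [hqs]
      rw [originSection, affLineStruct]
      unfold AffLine
      rw [← Spec.map_comp, hcmp, Spec.map_id]
    haveI : IsIso (originSection k ≫ js ≫ q) := by rw [hg2]; infer_instance
    have hcomp : IsClosedImmersion
        ((pullback.lift (originSection k ≫ js) (𝟙 _) (by simp)) ≫
          pullback.fst q (originSection k ≫ js ≫ q)) := by
      rw [pullback.lift_fst]
      exact originSection_js_isClosedImmersion k js jt hglue hcover
    exact (MorphismProperty.cancel_right_of_respectsIso (P := @IsClosedImmersion) _ _).mp hcomp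

end
end
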